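/- arXiv:2211.07873 — 3 statements merged into one kernel-verified Lean document; each statement's English description precedes it below -/
import Mathlib

section
/- Let q ≥ 1 be an integer. A point (z₀, z₁) ∈ S³ represents a fixed point of the involution τ on L_{2q} — that is, (conj(z₀), conj(z₁)) lies in the μ_{2q}-orbit of (z₀, z₁) — if and only if there exists θ ∈ ℝ such that (z₀, z₁) lies in the μ_{2q}-orbit of (cos θ, sin θ) or in the μ_{2q}-orbit of (e^{−iπ/(2q)} cos θ, e^{−iπ/(2q)} sin θ). -/
open Complex Real

/-- `w` lies in the `μ_p`-orbit of `z`, where the group `μ_p` of `p`-th roots of unity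
acts on `ℂ²` by scalar multiplication. -/
def lensRelC (p : ℕ) (z w : ℂ × ℂ) : Prop :=
  ∃ u : ℂ, u ^ p = 1 ∧ w = (u * z.1, u * z.2)

lemma conj_mul_self_eq_one {c : ℂ} (h : ‖c‖ = 1) : (starRingEnd ℂ) c * c = 1 := by
  rw [mul_comm, Complex.mul_conj]
  norm_cast
  rw [← Complex.sq_norm, h, one_pow]

lemma exists_cos_sin {a b : ℝ} (h : a ^ 2 + b ^ 2 = 1) :
    ∃ θ : ℝ, Real.cos θ = a ∧ Real.sin θ = b := by
  set c : ℂ := ⟨a, b⟩ with hc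
  have habs : ‖c‖ = 1 := by
    rw [Complex.norm_def, Complex.normSq_mk]
    rw [show a * a + b * b = 1 by nlinarith]
    exact Real.sqrt_one
  have hne : c ≠ 0 := by
    intro h0
    rw [h0] at habs
    simp at habs
  refine ⟨Complex.arg c, ?_, ?_⟩
  · rw [Complex.cos_arg hne, habs]
    simp [hc]
  · rw [Complex.sin_arg, habs]
    simp [hc]

lemma lensRelC_conj_of_real_mul (n : ℕ) (hn : n ≠ 0) (c : ℂ)
    (hc : c ^ (2 * n) = 1 ∨ c ^ (2 * n) = -1) (a b : ℝ) :
    lensRelC (2 * n) (c * (a : ℂ), c * (b : ℂ))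
      ((starRingEnd ℂ) (c * (a : ℂ)), (starRingEnd ℂ) (c * (b : ℂ))) := by
  have h4 : c ^ (2 * (2 * n)) = 1 := by
    rw [mul_comm, pow_mul]
    rcases hc with h | h <;> rw [h] <;> norm_num
  have habs : ‖c‖ = 1 := by
    have := Complex.norm_eq_one_of_pow_eq_one h4 (by omega)
    exact this
  have hcc : (starRingEnd ℂ) c * c = 1 := conj_mul_self_eq_one habs
  refine ⟨(starRingEnd ℂ) c ^ 2, ?_, ?_⟩
  · rw [← pow_mul, ← map_pow, h4, map_one]
  · simp only [Prod.mk.injEq, map_mul, Complex.conj_ofReal]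
    constructor
    · linear_combination (-(starRingEnd ℂ) c * (a : ℂ)) * hcc
    · linear_combination (-(starRingEnd ℂ) c * (b : ℂ)) * hcc

/-- Let `q ≥ 1`. A point `(z₀, z₁) ∈ S³` represents a fixed point of
the involution `τ` on `L_{2q}` — i.e. `(conj z₀, conj z₁)` lies in the `μ_{2q}`-orbit
of `(z₀, z₁)` — if and only if there is `θ ∈ ℝ` such that `(z₀, z₁)` lies in the
`μ_{2q}`-orbit of `(cos θ, sin θ)` or in the `μ_{2q}`-orbit of
`(e^{-iπ/(2q)} cos θ, e^{-iπ/(2q)} sin θ)`. -/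
theorem fixed_points_of_lens_involution (q : ℕ) (hq : 1 ≤ q) (z₀ z₁ : ℂ)
    (hz : ‖z₀‖ ^ 2 + ‖z₁‖ ^ 2 = 1) :
    lensRelC (2 * q) (z₀, z₁) ((starRingEnd ℂ) z₀, (starRingEnd ℂ) z₁) ↔
      ∃ θ : ℝ,
        lensRelC (2 * q) (((Real.cos θ : ℝ) : ℂ), ((Real.sin θ : ℝ) : ℂ)) (z₀, z₁) ∨
        lensRelC (2 * q)
          (Complex.exp (-(π : ℂ) * Complex.I / (2 * q)) * ((Real.cos θ : ℝ) : ℂ),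
           Complex.exp (-(π : ℂ) * Complex.I / (2 * q)) * ((Real.sin θ : ℝ) : ℂ))
          (z₀, z₁) := by
  have hq0 : (q : ℂ) ≠ 0 := Nat.cast_ne_zero.mpr (by omega)
  have h2q0 : 2 * q ≠ 0 := by omega
  have hexp : ((2 * q : ℕ) : ℂ) * ((π : ℂ) * Complex.I / (2 * q)) = (π : ℂ) * Complex.I := by
    push_cast
    field_simp
  have hexpneg : ((2 * q : ℕ) : ℂ) * (-(π : ℂ) * Complex.I / (2 * q)) = -((π : ℂ) * Complex.I) := by
    push_cast
    field_simp
  constructor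
  · rintro ⟨u, hu2q, huv⟩
    have habsu : ‖u‖ = 1 := by
      have := Complex.norm_eq_one_of_pow_eq_one hu2q h2q0
      exact this
    obtain ⟨hz0, hz1⟩ : (starRingEnd ℂ) z₀ = u * z₀ ∧ (starRingEnd ℂ) z₁ = u * z₁ := by
      simpa [Prod.ext_iff] using huv
    set v : ℂ := Complex.exp ((Complex.arg u : ℂ) / 2 * Complex.I) with hvdef
    have hv2 : v ^ 2 = u := by
      rw [sq, ← Complex.exp_add]
      have : (Complex.arg u : ℂ) / 2 * Complex.I + (Complex.arg u : ℂ) / 2 * Complex.I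
          = (Complex.arg u : ℂ) * Complex.I := by ring
      rw [this]
      have := Complex.norm_mul_exp_arg_mul_I u
      rw [habsu] at this
      simpa using this
    have habsv : ‖v‖ = 1 := by
      rw [hvdef, Complex.norm_exp]
      simp
    have hvc : (starRingEnd ℂ) v * v = 1 := conj_mul_self_eq_one habsv
    have hre0 : (starRingEnd ℂ) (v * z₀) = v * z₀ := by
      rw [map_mul, hz0, ← hv2]
      linear_combination (v * z₀) * hvc
    have hre1 : (starRingEnd ℂ) (v * z₁) = v * z₁ := by
      rw [map_mul, hz1, ← hv2]
      linear_combination (v * z₁) * hvc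
    set a : ℝ := (v * z₀).re with hadef
    set b : ℝ := (v * z₁).re with hbdef
    have ha : (a : ℂ) = v * z₀ := Complex.conj_eq_iff_re.mp hre0
    have hb : (b : ℂ) = v * z₁ := Complex.conj_eq_iff_re.mp hre1
    have hab : a ^ 2 + b ^ 2 = 1 := by
      have h0 : |a| = ‖z₀‖ := by
        rw [← Real.norm_eq_abs, ← Complex.norm_real, ha, norm_mul, habsv, one_mul]
      have h1 : |b| = ‖z₁‖ := by
        rw [← Real.norm_eq_abs, ← Complex.norm_real, hb, norm_mul, habsv, one_mul]
      calc a ^ 2 + b ^ 2 = |a| ^ 2 + |b| ^ 2 := by rw [_root_.sq_abs, _root_.sq_abs]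
        _ = 1 := by rw [h0, h1]; exact hz
    obtain ⟨θ, hcos, hsin⟩ := exists_cos_sin hab
    have hz0' : z₀ = (starRingEnd ℂ) v * (a : ℂ) := by
      rw [ha]
      linear_combination (-z₀) * hvc
    have hz1' : z₁ = (starRingEnd ℂ) v * (b : ℂ) := by
      rw [hb]
      linear_combination (-z₁) * hvc
    have hcases : v ^ (2 * q) = 1 ∨ v ^ (2 * q) = -1 := by
      apply mul_self_eq_one_iff.mp
      rw [← sq, ← pow_mul, mul_comm (2 * q) 2, pow_mul, hv2, hu2q]
    refine ⟨θ, ?_⟩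
    rcases hcases with h1 | h1
    · left
      refine ⟨(starRingEnd ℂ) v, by rw [← map_pow, h1, map_one], ?_⟩
      simp only [Prod.mk.injEq]
      exact ⟨by rw [hz0', hcos], by rw [hz1', hsin]⟩
    · right
      refine ⟨(starRingEnd ℂ) v * Complex.exp ((π : ℂ) * Complex.I / (2 * q)), ?_, ?_⟩
      · rw [mul_pow, ← map_pow, h1, ← Complex.exp_nat_mul, hexp, Complex.exp_pi_mul_I]
        norm_num
      · simp only [Prod.mk.injEq]
        have hEE : Complex.exp ((π : ℂ) * Complex.I / (2 * q)) *
            Complex.exp (-(π : ℂ) * Complex.I / (2 * q)) = 1 := by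
          rw [← Complex.exp_add]
          rw [show (π : ℂ) * Complex.I / (2 * q) + -(π : ℂ) * Complex.I / (2 * q) = 0 by ring]
          exact Complex.exp_zero
        constructor
        · rw [hz0', hcos]
          linear_combination (-((starRingEnd ℂ) v * (a : ℂ))) * hEE
        · rw [hz1', hsin]
          linear_combination (-((starRingEnd ℂ) v * (b : ℂ))) * hEE
  · rintro ⟨θ, ⟨w, hw, hzw⟩ | ⟨w, hw, hzw⟩⟩
    · obtain ⟨h0, h1⟩ : z₀ = w * (Real.cos θ : ℂ) ∧ z₁ = w * (Real.sin θ : ℂ) := by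
        simpa [Prod.ext_iff] using hzw
      rw [h0, h1]
      exact lensRelC_conj_of_real_mul q (by omega) w (Or.inl hw) _ _
    · have hE : z₀ = (w * Complex.exp (-(π : ℂ) * Complex.I / (2 * q))) * (Real.cos θ : ℂ) ∧
          z₁ = (w * Complex.exp (-(π : ℂ) * Complex.I / (2 * q))) * (Real.sin θ : ℂ) := by
        obtain ⟨h0, h1⟩ : z₀ = w * (Complex.exp (-(π : ℂ) * Complex.I / (2 * q)) * (Real.cos θ : ℂ)) ∧
            z₁ = w * (Complex.exp (-(π : ℂ) * Complex.I / (2 * q)) * (Real.sin θ : ℂ)) := by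
          simpa [Prod.ext_iff] using hzw
        exact ⟨by rw [h0]; ring, by rw [h1]; ring⟩
      rw [hE.1, hE.2]
      refine lensRelC_conj_of_real_mul q (by omega) _ (Or.inr ?_) _ _
      rw [mul_pow, hw, one_mul, ← Complex.exp_nat_mul, hexpneg, Complex.exp_neg,
        Complex.exp_pi_mul_I]
      norm_num
end

section
/- There is no continuous function s : ℝ → ℂ which is 2π-periodic (s(θ + 2π) = s(θ) for all θ), nowhere vanishing, and satisfies s(θ) = e^{iθ} · conj(s(θ)) for all θ ∈ ℝ. Equivalently, the product line bundle S¹ × ℂ over the circle S¹ = ℝ/2πℤ (with trivial involution on the base) endowed with the 'Real' structure (θ, λ) ↦ (θ, e^{iθ} · conj(λ)) admits no nowhere-vanishing invariant continuous section, and hence is a non-trivial 'Real' line bundle. -/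
open Complex Real

/-- There is no continuous, `2π`-periodic, nowhere-vanishing function
`s : ℝ → ℂ` satisfying `s θ = e^{iθ} · conj (s θ)` for all `θ`. Equivalently, the
product line bundle over the circle `ℝ/2πℤ` endowed with the "Real" structure
`(θ, λ) ↦ (θ, e^{iθ} conj λ)` admits no nowhere-vanishing invariant continuous section,
hence is a non-trivial "Real" line bundle. -/
theorem no_invariant_section :
    ¬ ∃ s : ℝ → ℂ, Continuous s ∧ (∀ θ : ℝ, s (θ + 2 * π) = s θ) ∧
      (∀ θ : ℝ, s θ ≠ 0) ∧
      (∀ θ : ℝ, s θ = Complex.exp ((θ : ℂ) * Complex.I) * (starRingEnd ℂ) (s θ)) := by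
  rintro ⟨s, hc, hper, hne, hR⟩
  -- the untwisted section
  set f : ℝ → ℂ := fun θ => Complex.exp (((-θ / 2 : ℝ) : ℂ) * Complex.I) * s θ with hf
  have hfc : Continuous f := by
    apply Continuous.mul _ hc
    exact Complex.continuous_exp.comp
      ((Complex.continuous_ofReal.comp ((continuous_neg.div_const 2))).mul continuous_const)
  -- f is real valued
  have hreal : ∀ θ : ℝ, (starRingEnd ℂ) (f θ) = f θ := by
    intro θ
    simp only [hf, map_mul, ← Complex.exp_conj, map_mul, map_neg, Complex.conj_I,
      Complex.conj_ofReal]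
    have hconj : (starRingEnd ℂ) (s θ) = Complex.exp (-(θ : ℂ) * Complex.I) * s θ := by
      have := hR θ
      have h2 : Complex.exp (-(θ : ℂ) * Complex.I) * s θ
          = Complex.exp (-(θ : ℂ) * Complex.I) * (Complex.exp ((θ : ℂ) * Complex.I)
            * (starRingEnd ℂ) (s θ)) := by rw [← this]
      rw [h2, ← mul_assoc, ← Complex.exp_add]
      ring_nf
      simp
    rw [hconj]
    rw [← mul_assoc, ← Complex.exp_add]
    push_cast
    ring_nf
  -- anti-periodicity
  have hanti : ∀ θ : ℝ, f (θ + 2 * π) = - f θ := by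
    intro θ
    simp only [hf]
    rw [hper θ]
    have : (((-((θ : ℝ) + 2 * π) / 2 : ℝ)) : ℂ) * Complex.I
        = (((-θ / 2 : ℝ)) : ℂ) * Complex.I + (π : ℂ) * Complex.I * (-1) := by
      push_cast; ring
    rw [this]
    rw [Complex.exp_add]
    have : Complex.exp ((π : ℂ) * Complex.I * (-1)) = -1 := by
      rw [show ((π : ℂ) * Complex.I * (-1)) = (-1 : ℤ) * (↑π * Complex.I) by ring,
        Complex.exp_int_mul, Complex.exp_pi_mul_I]
      norm_num
    rw [this]; ring
  -- real part
  set g : ℝ → ℝ := fun θ => (f θ).re with hg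
  have hgc : Continuous g := Complex.continuous_re.comp hfc
  have hfg : ∀ θ, f θ = (g θ : ℂ) := by
    intro θ
    have him : (f θ).im = 0 := by
      have := hreal θ
      rw [Complex.conj_eq_iff_im] at this
      exact this
    exact Complex.ext rfl (by simp [hg, him])
  have hgne : ∀ θ, g θ ≠ 0 := by
    intro θ h
    apply hne θ
    have hfz : f θ = 0 := by rw [hfg θ, h]; simp
    have := Complex.exp_ne_zero (((-θ / 2 : ℝ) : ℂ) * Complex.I)
    simpa [hf, this] using hfz
  have hganti : g (0 + 2 * π) = - g 0 := by
    simp only [hg]; rw [hanti 0]; simp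
  -- IVT contradiction
  rcases lt_or_gt_of_ne (hgne 0) with h0 | h0
  · have h1 : 0 < g (0 + 2 * π) := by rw [hganti]; linarith
    obtain ⟨c, _, hc0⟩ := intermediate_value_Icc (by positivity : (0:ℝ) ≤ 0 + 2 * π)
      hgc.continuousOn (Set.mem_Icc.mpr ⟨le_of_lt h0, le_of_lt h1⟩)
    exact hgne c hc0
  · have h1 : g (0 + 2 * π) < 0 := by rw [hganti]; linarith
    obtain ⟨c, _, hc0⟩ := intermediate_value_Icc' (by positivity : (0:ℝ) ≤ 0 + 2 * π)
      hgc.continuousOn (Set.mem_Icc.mpr ⟨le_of_lt h1, le_of_lt h0⟩)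
    exact hgne c hc0
end

section
/- Let e₁, e₂ ∈ ℝ³ be the first two standard basis vectors and let D = diag(1, −1, −1), which is an element of SO(3). For all R, R' ∈ SO(3), the conditions R' e₁ = R e₁ and (R' e₂ = R e₂ or R' e₂ = −R e₂) hold if and only if R' = R or R' = R·D. Consequently, each fiber of the map from SO(3) to the space of pairs (unit vector, tangent line) given by R ↦ (R e₁, span(R e₂)) consists of exactly two elements. -/
/-- `SO(3)`: the real orthogonal `3×3` matrices of determinant `1`. -/
def SO3 : Set (Matrix (Fin 3) (Fin 3) ℝ) :=
  {R | R.transpose * R = 1 ∧ R.det = 1}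

/-- The rotation `D = diag(1, -1, -1)` by angle `π` around the first axis. -/
def Dmat : Matrix (Fin 3) (Fin 3) ℝ := Matrix.diagonal ![1, -1, -1]

/-- The first standard basis vector `e₁ ∈ ℝ³`. -/
def e₁ : Fin 3 → ℝ := Pi.single 0 1

/-- The second standard basis vector `e₂ ∈ ℝ³`. -/
def e₂ : Fin 3 → ℝ := Pi.single 1 1

open Matrix

private lemma col0 (M : Matrix (Fin 3) (Fin 3) ℝ) : M.mulVec e₁ = fun i => M i 0 := by
  funext i; simp [e₁, mulVec_single]

private lemma col1 (M : Matrix (Fin 3) (Fin 3) ℝ) : M.mulVec e₂ = fun i => M i 1 := by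
  funext i; simp [e₂, mulVec_single]

private lemma D_SO3 : Dmat ∈ SO3 := by
  constructor
  · ext i j
    fin_cases i <;> fin_cases j <;>
      simp [Dmat, Matrix.mul_apply, Fin.sum_univ_three, Matrix.one_apply]
  · simp [Dmat, Matrix.det_fin_three, Matrix.diagonal]

private lemma D_e₁ : Dmat.mulVec e₁ = e₁ := by
  rw [col0]; funext i; fin_cases i <;> simp [Dmat, e₁, Matrix.diagonal]

private lemma D_e₂ : Dmat.mulVec e₂ = -e₂ := by
  rw [col1]; funext i; fin_cases i <;> simp [Dmat, e₂, Matrix.diagonal]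

private lemma SO3_mul {A B : Matrix (Fin 3) (Fin 3) ℝ} (hA : A ∈ SO3) (hB : B ∈ SO3) :
    A * B ∈ SO3 := by
  constructor
  · rw [transpose_mul, Matrix.mul_assoc, ← Matrix.mul_assoc Aᵀ, hA.1, Matrix.one_mul, hB.1]
  · rw [det_mul, hA.2, hB.2, one_mul]

private lemma SO3_right_inv {A : Matrix (Fin 3) (Fin 3) ℝ} (hA : A ∈ SO3) : A * Aᵀ = 1 :=
  mul_eq_one_comm.mp hA.1

private lemma key (S : Matrix (Fin 3) (Fin 3) ℝ) (hS : S ∈ SO3)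
    (h1 : S.mulVec e₁ = e₁) (h2 : S.mulVec e₂ = e₂ ∨ S.mulVec e₂ = -e₂) :
    S = 1 ∨ S = Dmat := by
  obtain ⟨ho, hd⟩ := hS
  rw [col0] at h1
  have a0 : S 0 0 = 1 := by have := congrFun h1 0; simpa [e₁] using this
  have a1 : S 1 0 = 0 := by have := congrFun h1 1; simpa [e₁] using this
  have a2 : S 2 0 = 0 := by have := congrFun h1 2; simpa [e₁] using this
  have o02 : S 0 0 * S 0 2 + S 1 0 * S 1 2 + S 2 0 * S 2 2 = 0 := by
    have := congrFun (congrFun ho 0) 2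
    simpa [Matrix.mul_apply, Fin.sum_univ_three, Matrix.one_apply] using this
  have o12 : S 0 1 * S 0 2 + S 1 1 * S 1 2 + S 2 1 * S 2 2 = 0 := by
    have := congrFun (congrFun ho 1) 2
    simpa [Matrix.mul_apply, Fin.sum_univ_three, Matrix.one_apply] using this
  rw [Matrix.det_fin_three] at hd
  rcases h2 with h2 | h2 <;> rw [col1] at h2
  · have b0 : S 0 1 = 0 := by have := congrFun h2 0; simpa [e₂] using this
    have b1 : S 1 1 = 1 := by have := congrFun h2 1; simpa [e₂] using this
    have b2 : S 2 1 = 0 := by have := congrFun h2 2; simpa [e₂] using this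
    have c0 : S 0 2 = 0 := by rw [a0, a1, a2] at o02; linarith
    have c1 : S 1 2 = 0 := by rw [b0, b1, b2] at o12; linarith
    have c2 : S 2 2 = 1 := by
      rw [a0, a1, a2, b0, b1, b2, c0, c1] at hd; linarith
    left
    ext i j
    fin_cases i <;> fin_cases j <;>
      simp [a0, a1, a2, b0, b1, b2, c0, c1, c2, Matrix.one_apply]
  · have b0 : S 0 1 = 0 := by have := congrFun h2 0; simpa [e₂] using this
    have b1 : S 1 1 = -1 := by have := congrFun h2 1; simpa [e₂] using this
    have b2 : S 2 1 = 0 := by have := congrFun h2 2; simpa [e₂] using this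
    have c0 : S 0 2 = 0 := by rw [a0, a1, a2] at o02; linarith
    have c1 : S 1 2 = 0 := by rw [b0, b1, b2] at o12; linarith
    have c2 : S 2 2 = -1 := by
      rw [a0, a1, a2, b0, b1, b2, c0, c1] at hd; linarith
    right
    ext i j
    fin_cases i <;> fin_cases j <;>
      simp [a0, a1, a2, b0, b1, b2, c0, c1, c2, Dmat, Matrix.diagonal]

private lemma main_iff {R : Matrix (Fin 3) (Fin 3) ℝ} (hR : R ∈ SO3)
    {R' : Matrix (Fin 3) (Fin 3) ℝ} (hR' : R' ∈ SO3) :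
    (R'.mulVec e₁ = R.mulVec e₁ ∧
      (R'.mulVec e₂ = R.mulVec e₂ ∨ R'.mulVec e₂ = -(R.mulVec e₂))) ↔
    (R' = R ∨ R' = R * Dmat) := by
  constructor
  · rintro ⟨h1, h2⟩
    set S : Matrix (Fin 3) (Fin 3) ℝ := Rᵀ * R' with hSdef
    have hSO : S ∈ SO3 := by
      constructor
      · rw [hSdef, transpose_mul, transpose_transpose, Matrix.mul_assoc,
          ← Matrix.mul_assoc R, SO3_right_inv hR, Matrix.one_mul, hR'.1]
      · rw [hSdef, det_mul, det_transpose, hR.2, hR'.2, one_mul]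
    have hs1 : S.mulVec e₁ = e₁ := by
      rw [hSdef, ← Matrix.mulVec_mulVec, h1, Matrix.mulVec_mulVec, hR.1, Matrix.one_mulVec]
    have hs2 : S.mulVec e₂ = e₂ ∨ S.mulVec e₂ = -e₂ := by
      rcases h2 with h2 | h2
      · left
        rw [hSdef, ← Matrix.mulVec_mulVec, h2, Matrix.mulVec_mulVec, hR.1, Matrix.one_mulVec]
      · right
        rw [hSdef, ← Matrix.mulVec_mulVec, h2, Matrix.mulVec_neg, Matrix.mulVec_mulVec,
          hR.1, Matrix.one_mulVec]
    have hre : R' = R * S := by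
      rw [hSdef, ← Matrix.mul_assoc, SO3_right_inv hR, Matrix.one_mul]
    rcases key S hSO hs1 hs2 with h | h
    · left; rw [hre, h, Matrix.mul_one]
    · right; rw [hre, h]
  · rintro (rfl | rfl)
    · exact ⟨rfl, Or.inl rfl⟩
    · constructor
      · rw [← Matrix.mulVec_mulVec, D_e₁]
      · right
        rw [← Matrix.mulVec_mulVec, D_e₂, Matrix.mulVec_neg]

private lemma norm_col1 {A : Matrix (Fin 3) (Fin 3) ℝ} (hA : A ∈ SO3) :
    (A.mulVec e₂ 0)^2 + (A.mulVec e₂ 1)^2 + (A.mulVec e₂ 2)^2 = 1 := by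
  have := congrFun (congrFun hA.1 1) 1
  rw [col1]
  simpa [Matrix.mul_apply, Fin.sum_univ_three, Matrix.one_apply, sq] using this

private lemma span_neg (v : Fin 3 → ℝ) :
    Submodule.span ℝ {-v} = Submodule.span ℝ ({v} : Set (Fin 3 → ℝ)) := by
  apply le_antisymm
  · rw [Submodule.span_le]
    intro x hx
    rcases hx with rfl
    exact Submodule.mem_span_singleton.mpr ⟨-1, by simp⟩
  · rw [Submodule.span_le]
    intro x hx
    rcases hx with rfl
    exact Submodule.mem_span_singleton.mpr ⟨-1, by simp⟩

/-- `D = diag(1, -1, -1)` lies in `SO(3)`; for all `R, R' ∈ SO(3)`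
one has `R' e₁ = R e₁` and `R' e₂ = ± R e₂` iff `R' = R` or `R' = R·D`. Consequently
each fiber of the map `R ↦ (R e₁, span (R e₂))` to pairs (unit vector, tangent line)
has exactly two elements. -/
theorem double_cover_onto_tangent_lines :
    Dmat ∈ SO3 ∧
    (∀ R ∈ SO3, ∀ R' ∈ SO3,
      (R'.mulVec e₁ = R.mulVec e₁ ∧
        (R'.mulVec e₂ = R.mulVec e₂ ∨ R'.mulVec e₂ = -(R.mulVec e₂))) ↔
      (R' = R ∨ R' = R * Dmat)) ∧
    (∀ R : SO3,
      Nat.card {R' : SO3 //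
        (R' : Matrix (Fin 3) (Fin 3) ℝ).mulVec e₁ =
          (R : Matrix (Fin 3) (Fin 3) ℝ).mulVec e₁ ∧
        Submodule.span ℝ {(R' : Matrix (Fin 3) (Fin 3) ℝ).mulVec e₂} =
          Submodule.span ℝ {(R : Matrix (Fin 3) (Fin 3) ℝ).mulVec e₂}} = 2) := by
  refine ⟨D_SO3, fun R hR R' hR' => main_iff hR hR', fun R => ?_⟩
  rw [Nat.card_eq_two_iff]
  have hRD : (R : Matrix (Fin 3) (Fin 3) ℝ) * Dmat ∈ SO3 := SO3_mul R.2 D_SO3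
  refine ⟨⟨⟨R, R.2⟩, rfl, rfl⟩,
    ⟨⟨(R : Matrix (Fin 3) (Fin 3) ℝ) * Dmat, hRD⟩, ?_, ?_⟩, ?_, ?_⟩
  · show ((R : Matrix (Fin 3) (Fin 3) ℝ) * Dmat).mulVec e₁ = _
    rw [← Matrix.mulVec_mulVec, D_e₁]
  · show Submodule.span ℝ {((R : Matrix (Fin 3) (Fin 3) ℝ) * Dmat).mulVec e₂} = _
    rw [← Matrix.mulVec_mulVec, D_e₂, Matrix.mulVec_neg, span_neg]
  · -- distinctness
    intro h
    have h1 : (R : Matrix (Fin 3) (Fin 3) ℝ) = (R : Matrix (Fin 3) (Fin 3) ℝ) * Dmat := by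
      have := congrArg (fun z => (z.1 : Matrix (Fin 3) (Fin 3) ℝ)) h
      simpa using this
    have h2 : (1 : Matrix (Fin 3) (Fin 3) ℝ) = Dmat := by
      calc (1 : Matrix (Fin 3) (Fin 3) ℝ)
          = (R : Matrix (Fin 3) (Fin 3) ℝ)ᵀ * R := (R.2).1.symm
        _ = (R : Matrix (Fin 3) (Fin 3) ℝ)ᵀ * ((R : Matrix (Fin 3) (Fin 3) ℝ) * Dmat) := by
            rw [← h1]
        _ = ((R : Matrix (Fin 3) (Fin 3) ℝ)ᵀ * R) * Dmat := by rw [Matrix.mul_assoc]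
        _ = Dmat := by rw [(R.2).1, Matrix.one_mul]
    have := congrFun (congrFun h2 1) 1
    simp [Dmat, Matrix.one_apply, Matrix.diagonal] at this
    linarith
  · -- these two elements exhaust the fiber
    rw [Set.eq_univ_iff_forall]
    rintro ⟨⟨S, hS⟩, h1, hsp⟩
    have hmem : S.mulVec e₂ ∈ Submodule.span ℝ
        {(R : Matrix (Fin 3) (Fin 3) ℝ).mulVec e₂} := by
      rw [← hsp]; exact Submodule.mem_span_singleton_self _
    obtain ⟨c, hc⟩ := Submodule.mem_span_singleton.mp hmem
    have hRn := norm_col1 R.2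
    have hSn := norm_col1 hS
    rw [← hc] at hSn
    simp only [Pi.smul_apply, smul_eq_mul] at hSn
    have hc2 : c ^ 2 = 1 := by nlinarith [hRn, hSn]
    have hcc : c = 1 ∨ c = -1 := by
      have : (c - 1) * (c + 1) = 0 := by nlinarith
      rcases mul_eq_zero.mp this with h | h
      · left; linarith
      · right; linarith
    have h2 : S.mulVec e₂ = (R : Matrix (Fin 3) (Fin 3) ℝ).mulVec e₂ ∨
        S.mulVec e₂ = -((R : Matrix (Fin 3) (Fin 3) ℝ).mulVec e₂) := by
      rcases hcc with rfl | rfl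
      · left; rw [← hc, one_smul]
      · right; rw [← hc, neg_one_smul]
    rcases (main_iff R.2 hS).mp ⟨h1, h2⟩ with h | h
    · left; exact Subtype.ext (Subtype.ext h)
    · right; exact Subtype.ext (Subtype.ext h)
end
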